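/- Let M be a non-orientable regular map of type {p,q} where at least one of p, q is odd. Then M contains a closed walk of odd length that traces an odd number of 1-edges. -/

import Mathlib

/-- A maniplex of rank `n` in permutation form: a flag set `F` together with
fixed-point-free involutions `r i` (the `i`-adjacency maps, giving a proper
`n`-edge-colouring of an `n`-valent graph), satisfying the string property
(for non-consecutive colours `i, j` the maps commute and the `{i,j}`-subgraph
has no multiple edges, so that it is a disjoint union of 4-cycles), and
connectivity. -/
structure Maniplex (n : ℕ) (F : Type*) where
  r : Fin n → F → F
  invol : ∀ i u, r i (r i u) = u
  free : ∀ i u, r i u ≠ u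
  stringComm : ∀ i j : Fin n, (i : ℕ) + 1 < (j : ℕ) → ∀ u, r i (r j u) = r j (r i u)
  stringNe : ∀ i j : Fin n, (i : ℕ) + 1 < (j : ℕ) → ∀ u, r i u ≠ r j u
  conn : ∀ u v : F, ∃ l : List (Fin n), l.foldl (fun w i => r i w) u = v

/-- The flag reached from `u` by following the walk whose successive edge
colours are listed in `l`. -/
def walkEnd {n : ℕ} {F : Type*} (M : Maniplex n F) (l : List (Fin n)) (u : F) : F :=
  l.foldl (fun w i => M.r i w) u

/-- The alternating weight `Σ (-1)^t ω(e_t)` of the walk starting at `u` whose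
successive edge colours are listed in `l`. -/
def walkWeight {n k : ℕ} {F : Type*} (M : Maniplex n F) (ω : Fin n → F → ZMod k) :
    List (Fin n) → F → ZMod k
  | [], _ => 0
  | i :: t, u => ω i u - walkWeight M ω t (M.r i u)

/-- The `i`-adjacency map of the cross-cover `M^ω`: flags `F × ℤ_k`, with
`(u, a)` being `i`-adjacent to `(r i u, ω_i(u) - a)`. -/
def coverMap {n k : ℕ} {F : Type*} (M : Maniplex n F) (ω : Fin n → F → ZMod k)
    (i : Fin n) : F × ZMod k → F × ZMod k :=
  fun p => (M.r i p.1, ω i p.1 - p.2)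

/-- A map (3-maniplex) is regular if its colour-preserving automorphism group
is transitive on flags. -/
def ManiplexRegular {n : ℕ} {F : Type*} (M : Maniplex n F) : Prop :=
  ∀ u v : F, ∃ φ : Equiv.Perm F,
    (∀ (i : Fin n) (x : F), φ (M.r i x) = M.r i (φ x)) ∧ φ u = v

/-- A map (3-maniplex) is non-orientable iff its flag graph is non-bipartite,
i.e. it contains a closed walk of odd length. -/
def NonOrientable {n : ℕ} {F : Type*} (M : Maniplex n F) : Prop :=
  ∃ (u : F) (l : List (Fin n)), Odd l.length ∧ walkEnd M l u = u

/-- A map is of type `{p,q}` if every component of the subgraph induced by the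
colours `0,1` is a cycle of length `2p`, and every component of the subgraph
induced by the colours `1,2` is a cycle of length `2q`:  the rotations
`r₁ ∘ r₀` and `r₂ ∘ r₁` have all orbits of size exactly `p`, resp. `q`, and
there are no multiple edges. -/
def MapOfType {F : Type*} (M : Maniplex 3 F) (p q : ℕ) : Prop :=
  (∀ u : F,
      (fun w => M.r 1 (M.r 0 w))^[p] u = u ∧
      (∀ t, 0 < t → t < p → (fun w => M.r 1 (M.r 0 w))^[t] u ≠ u) ∧
      M.r 0 u ≠ M.r 1 u) ∧
  (∀ u : F,
      (fun w => M.r 2 (M.r 1 w))^[q] u = u ∧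
      (∀ t, 0 < t → t < q → (fun w => M.r 2 (M.r 1 w))^[t] u ≠ u) ∧
      M.r 1 u ≠ M.r 2 u)


lemma walkEnd_append {n : ℕ} {F : Type*} (M : Maniplex n F) (l₁ l₂ : List (Fin n)) (u : F) :
    walkEnd M (l₁ ++ l₂) u = walkEnd M l₂ (walkEnd M l₁ u) :=
  List.foldl_append

lemma walkEnd_rep {F : Type*} (M : Maniplex 3 F) (a b : Fin 3) (m : ℕ) (u : F) :
    walkEnd M ((List.replicate m [a, b]).flatten) u = (fun w => M.r b (M.r a w))^[m] u := by
  induction m generalizing u with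
  | zero => rfl
  | succ m ih =>
    rw [List.replicate_succ, List.flatten_cons, Function.iterate_succ_apply]
    have : walkEnd M ([a, b] ++ (List.replicate m [a, b]).flatten) u
        = walkEnd M ((List.replicate m [a, b]).flatten) (M.r b (M.r a u)) :=
      walkEnd_append M _ _ u
    rw [this, ih]

lemma count_rep (a b c : Fin 3) (m : ℕ) :
    ((List.replicate m [a, b]).flatten).count c = m * ([a, b].count c) := by
  induction m with
  | zero => simp
  | succ m ih =>
    rw [List.replicate_succ, List.flatten_cons, List.count_append, ih]
    ring

lemma length_rep (a b : Fin 3) (m : ℕ) :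
    ((List.replicate m [a, b]).flatten).length = 2 * m := by
  induction m with
  | zero => rfl
  | succ m ih =>
    rw [List.replicate_succ, List.flatten_cons, List.length_append, ih]
    simp; ring

/-- Every non-orientable regular map of type `{p,q}` with at least one of `p`,
`q` odd contains a closed walk of odd length tracing an odd number of
`1`-edges. -/
theorem exists_oddWalk_odd_one_edges {F : Type*} (M : Maniplex 3 F) (p q : ℕ)
    (htype : MapOfType M p q) (hreg : ManiplexRegular M) (hnonor : NonOrientable M)
    (hodd : Odd p ∨ Odd q) :
    ∃ (u : F) (l : List (Fin 3)), Odd l.length ∧ walkEnd M l u = u ∧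
      Odd (l.count (1 : Fin 3)) := by
  obtain ⟨u, l, hlen, hend⟩ := hnonor
  rcases Nat.even_or_odd (l.count (1 : Fin 3)) with hc | hc
  · obtain ⟨m, a, b, hm, hcyc, hab⟩ :
        ∃ m : ℕ, ∃ a b : Fin 3, Odd m ∧ (fun w => M.r b (M.r a w))^[m] u = u ∧
          ([a, b].count (1 : Fin 3)) = 1 := by
      rcases hodd with hp | hq
      · exact ⟨p, 0, 1, hp, (htype.1 u).1, by decide⟩
      · exact ⟨q, 1, 2, hq, (htype.2 u).1, by decide⟩
    refine ⟨u, l ++ (List.replicate m [a, b]).flatten, ?_, ?_, ?_⟩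
    · rw [List.length_append, length_rep]
      exact hlen.add_even ⟨m, by ring⟩
    · rw [walkEnd_append, hend, walkEnd_rep, hcyc]
    · rw [List.count_append, count_rep, hab, mul_one]
      exact hc.add_odd hm
  · exact ⟨u, l, hlen, hend, hc⟩
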